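/- (Lemma 3) In any SPIR scheme on a graph G satisfying the system model: for any two servers i and j that share the message W_k and randomness R_k (i.e., edge k joins vertices i and j), it holds that H(A_i^{[k]} | 𝒬) + H(A_j^{[k]} | 𝒬) ≥ H(A_i^{[k]} | R_k̄, W_k̄, 𝒬) + H(A_j^{[k]} | R_k̄, W_k̄, 𝒬) ≥ (1 + ρ)·L. -/

import Mathlib

open Finset
set_option linter.unusedSectionVars false

noncomputable section

namespace SPIR

variable {Ω : Type} [Fintype Ω]

/-- Probability of an event under the probability mass function `μ`
on the finite sample space `Ω`. -/
def pr (μ : Ω → ℝ) (E : Set Ω) : ℝ := ∑ ω, E.indicator μ ω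

/-- Shannon entropy of the random variable `X`, measured in `q`-ary units. -/
def ent (q : ℕ) (μ : Ω → ℝ) {α : Type*} (X : Ω → α) : ℝ :=
  -∑ ω, μ ω * Real.logb q (pr μ {ω' | X ω' = X ω})

/-- Conditional Shannon entropy `H(X | Y)` in `q`-ary units. -/
def condEnt (q : ℕ) (μ : Ω → ℝ) {α β : Type*} (X : Ω → α) (Y : Ω → β) : ℝ :=
  ent q μ (fun ω => (X ω, Y ω)) - ent q μ Y

/-- Mutual information `I(X ; Y)` in `q`-ary units. -/
def mutInf (q : ℕ) (μ : Ω → ℝ) {α β : Type*} (X : Ω → α) (Y : Ω → β) : ℝ :=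
  ent q μ X + ent q μ Y - ent q μ (fun ω => (X ω, Y ω))

/-- Two random variables have the same (joint) distribution. -/
def IdentDist (μ : Ω → ℝ) {α : Type*} (X Y : Ω → α) : Prop :=
  ∀ s : Set α, pr μ (X ⁻¹' s) = pr μ (Y ⁻¹' s)

/-- Independence of two random variables. -/
def IndepRV (μ : Ω → ℝ) {α β : Type*} (X : Ω → α) (Y : Ω → β) : Prop :=
  ∀ (s : Set α) (t : Set β),
    pr μ (X ⁻¹' s ∩ Y ⁻¹' t) = pr μ (X ⁻¹' s) * pr μ (Y ⁻¹' t)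

section basics
variable {μ : Ω → ℝ}

lemma pr_congr {E E' : Set Ω} (h : ∀ ω, ω ∈ E ↔ ω ∈ E') : pr μ E = pr μ E' := by
  unfold pr; congr 1; ext ω; rw [Set.ext h]

lemma pr_nonneg (h0 : ∀ ω, 0 ≤ μ ω) (E : Set Ω) : 0 ≤ pr μ E := by
  refine Finset.sum_nonneg fun ω _ => ?_
  classical
  rw [Set.indicator_apply]
  split <;> simp [h0 ω]

lemma pr_mono (h0 : ∀ ω, 0 ≤ μ ω) {E E' : Set Ω} (h : E ⊆ E') : pr μ E ≤ pr μ E' := by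
  refine Finset.sum_le_sum fun ω _ => ?_
  classical
  rw [Set.indicator_apply, Set.indicator_apply]
  by_cases hE : ω ∈ E
  · simp [hE, h hE]
  · simp [hE]; split <;> simp [h0 ω]

lemma le_pr (h0 : ∀ ω, 0 ≤ μ ω) {E : Set Ω} {ω₀ : Ω} (hω : ω₀ ∈ E) : μ ω₀ ≤ pr μ E := by
  classical
  calc μ ω₀ = E.indicator μ ω₀ := by rw [Set.indicator_apply]; simp [hω]
  _ ≤ pr μ E := Finset.single_le_sum (f := fun ω => E.indicator μ ω)
      (fun ω _ => by rw [Set.indicator_apply]; split <;> simp [h0 ω]) (mem_univ ω₀)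

lemma pr_univ (h1 : ∑ ω, μ ω = 1) : pr μ (Set.univ : Set Ω) = 1 := by
  unfold pr; simp [h1]

lemma pr_add_of_gap (h0 : ∀ ω, 0 ≤ μ ω) {E E' : Set Ω} (h : E ⊆ E') {ω₀ : Ω}
    (h1 : ω₀ ∈ E') (h2 : ω₀ ∉ E) : pr μ E + μ ω₀ ≤ pr μ E' := by
  classical
  have : pr μ E' - pr μ E = ∑ ω, (E'.indicator μ ω - E.indicator μ ω) := by
    unfold pr; rw [Finset.sum_sub_distrib]
  have key : μ ω₀ ≤ ∑ ω, (E'.indicator μ ω - E.indicator μ ω) := by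
    refine le_trans ?_ (Finset.single_le_sum (f := fun ω => E'.indicator μ ω - E.indicator μ ω)
      (fun ω _ => ?_) (mem_univ ω₀))
    · rw [Set.indicator_apply, Set.indicator_apply]; simp [h1, h2]
    · rw [Set.indicator_apply, Set.indicator_apply]
      by_cases hE : ω ∈ E
      · simp [hE, h hE]
      · simp [hE]; split <;> simp [h0 ω]
  linarith

lemma indicator_eq_ite {E : Set Ω} {ω : Ω} [Decidable (ω ∈ E)] :
    E.indicator μ ω = if ω ∈ E then μ ω else 0 := by
  by_cases h : ω ∈ E
  · rw [Set.indicator_of_mem h]; simp [h]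
  · rw [Set.indicator_of_notMem h]; simp [h]

end basics

section entropy
variable {μ : Ω → ℝ} {q : ℕ} {α β γ : Type*}

lemma ent_congr {X : Ω → α} {Y : Ω → β}
    (h : ∀ ω ω', X ω' = X ω ↔ Y ω' = Y ω) : ent q μ X = ent q μ Y := by
  unfold ent; congr 1; apply Finset.sum_congr rfl; intro ω _
  congr 2
  exact pr_congr (fun ω' => h ω ω')

lemma ent_mono (hq : 1 < (q : ℝ)) (h0 : ∀ ω, 0 ≤ μ ω) {X : Ω → α} {Y : Ω → β}
    (h : ∀ ω ω', X ω' = X ω → Y ω' = Y ω) : ent q μ Y ≤ ent q μ X := by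
  unfold ent
  apply neg_le_neg
  refine Finset.sum_le_sum fun ω _ => ?_
  rcases eq_or_lt_of_le (h0 ω) with hμ | hμ
  · rw [← hμ]; simp
  · have hX : 0 < pr μ {ω' | X ω' = X ω} := lt_of_lt_of_le hμ (le_pr h0 rfl)
    have hY : pr μ {ω' | X ω' = X ω} ≤ pr μ {ω' | Y ω' = Y ω} :=
      pr_mono h0 (fun ω' hω' => h ω ω' hω')
    exact mul_le_mul_of_nonneg_left
      ((Real.logb_le_logb hq hX (lt_of_lt_of_le hX hY)).2 hY) (le_of_lt hμ)

lemma condEnt_nonneg (hq : 1 < (q : ℝ)) (h0 : ∀ ω, 0 ≤ μ ω) (X : Ω → α) (Y : Ω → β) :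
    0 ≤ condEnt q μ X Y := by
  have := ent_mono (μ := μ) hq h0 (X := fun ω => (X ω, Y ω)) (Y := Y)
    (fun ω ω' hp => congrArg Prod.snd hp)
  unfold condEnt; linarith

/-- `Y` determines `X` almost everywhere. -/
def Det (μ : Ω → ℝ) {α β : Type*} (X : Ω → α) (Y : Ω → β) : Prop :=
  ∀ ω ω', 0 < μ ω → 0 < μ ω' → Y ω' = Y ω → X ω' = X ω

lemma condEnt_eq_sum {X : Ω → α} {Y : Ω → β} :
    condEnt q μ X Y = ∑ ω, μ ω * (Real.logb q (pr μ {ω' | Y ω' = Y ω})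
      - Real.logb q (pr μ {ω' | X ω' = X ω ∧ Y ω' = Y ω})) := by
  have e1 : ent q μ (fun ω => (X ω, Y ω))
      = -∑ ω, μ ω * Real.logb q (pr μ {ω' | X ω' = X ω ∧ Y ω' = Y ω}) := by
    unfold ent; congr 1; apply Finset.sum_congr rfl; intro ω _
    congr 2
    exact pr_congr (fun ω' => by simp [Prod.ext_iff])
  rw [condEnt, e1]
  unfold ent
  rw [neg_sub_neg, ← Finset.sum_sub_distrib]
  apply Finset.sum_congr rfl; intro ω _
  ring

lemma condEnt_term_nonneg (hq : 1 < (q : ℝ)) (h0 : ∀ ω, 0 ≤ μ ω) (X : Ω → α) (Y : Ω → β)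
    (ω : Ω) : 0 ≤ μ ω * (Real.logb q (pr μ {ω' | Y ω' = Y ω})
      - Real.logb q (pr μ {ω' | X ω' = X ω ∧ Y ω' = Y ω})) := by
  rcases eq_or_lt_of_le (h0 ω) with hμ | hμ
  · rw [← hμ]; simp
  · have hXY : 0 < pr μ {ω' | X ω' = X ω ∧ Y ω' = Y ω} :=
      lt_of_lt_of_le hμ (le_pr h0 ⟨rfl, rfl⟩)
    have hle : pr μ {ω' | X ω' = X ω ∧ Y ω' = Y ω} ≤ pr μ {ω' | Y ω' = Y ω} :=
      pr_mono h0 (fun ω' hω' => hω'.2)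
    have := (Real.logb_le_logb hq hXY (lt_of_lt_of_le hXY hle)).2 hle
    have := le_of_lt hμ
    nlinarith

lemma condEnt_eq_zero_iff (hq : 1 < (q : ℝ)) (h0 : ∀ ω, 0 ≤ μ ω) {X : Ω → α} {Y : Ω → β} :
    condEnt q μ X Y = 0 ↔ Det μ X Y := by
  rw [condEnt_eq_sum]
  rw [Finset.sum_eq_zero_iff_of_nonneg (fun ω _ => condEnt_term_nonneg hq h0 X Y ω)]
  constructor
  · intro h ω ω' hμ hμ' hY
    by_contra hX
    have hterm := h ω (mem_univ ω)
    have hXY : 0 < pr μ {ω'' | X ω'' = X ω ∧ Y ω'' = Y ω} :=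
      lt_of_lt_of_le hμ (le_pr h0 ⟨rfl, rfl⟩)
    have hgap := pr_add_of_gap h0 (μ := μ)
      (E := {ω'' | X ω'' = X ω ∧ Y ω'' = Y ω}) (E' := {ω'' | Y ω'' = Y ω})
      (fun ω'' hω'' => hω''.2) (ω₀ := ω') hY (fun hc => hX hc.1)
    have hlt : pr μ {ω'' | X ω'' = X ω ∧ Y ω'' = Y ω} < pr μ {ω'' | Y ω'' = Y ω} := by
      linarith
    have := Real.logb_lt_logb hq hXY hlt
    nlinarith
  · intro hdet ω _
    rcases eq_or_lt_of_le (h0 ω) with hμ | hμ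
    · rw [← hμ]; simp
    · have : pr μ {ω' | X ω' = X ω ∧ Y ω' = Y ω} = pr μ {ω' | Y ω' = Y ω} := by
        unfold pr; apply Finset.sum_congr rfl; intro ω' _
        rcases eq_or_lt_of_le (h0 ω') with hμ' | hμ'
        · classical
          rw [Set.indicator_apply, Set.indicator_apply, ← hμ']
          split <;> split <;> rfl
        · have : ω' ∈ {ω'' | X ω'' = X ω ∧ Y ω'' = Y ω} ↔ ω' ∈ {ω'' | Y ω'' = Y ω} :=
            ⟨fun h => h.2, fun h => ⟨hdet ω ω' hμ hμ' h, h⟩⟩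
          classical
          rw [Set.indicator_apply, Set.indicator_apply]
          simp only [this]
      rw [this]; ring

lemma det_of_fn {X : Ω → α} {Y : Ω → β} (h : ∀ ω ω', Y ω' = Y ω → X ω' = X ω) :
    Det μ X Y := fun ω ω' _ _ hY => h ω ω' hY

lemma det_trans {X : Ω → α} {Y : Ω → β} {Z : Ω → γ}
    (h1 : Det μ X Y) (h2 : Det μ Y Z) : Det μ X Z :=
  fun ω ω' hμ hμ' hZ => h1 ω ω' hμ hμ' (h2 ω ω' hμ hμ' hZ)

lemma det_map {X : Ω → α} {Z : Ω → γ} (f : α → β) (h : Det μ X Z) :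
    Det μ (fun ω => f (X ω)) Z :=
  fun ω ω' hμ hμ' hZ => congrArg f (h ω ω' hμ hμ' hZ)

lemma det_pair {X : Ω → α} {Y : Ω → β} {Z : Ω → γ}
    (h1 : Det μ X Z) (h2 : Det μ Y Z) : Det μ (fun ω => (X ω, Y ω)) Z :=
  fun ω ω' hμ hμ' hZ => by
    rw [Prod.ext_iff]; exact ⟨h1 ω ω' hμ hμ' hZ, h2 ω ω' hμ hμ' hZ⟩

lemma det_pi {ι : Type*} {X : ι → Ω → α} {Z : Ω → γ}
    (h : ∀ n, Det μ (X n) Z) : Det μ (fun ω (n : ι) => X n ω) Z :=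
  fun ω ω' hμ hμ' hZ => funext fun n => h n ω ω' hμ hμ' hZ

end entropy

section submod
variable {μ : Ω → ℝ} {q : ℕ} {α β γ : Type*}

lemma sum_pr_eq [DecidableEq α] (X : Ω → α) (P : Ω → Prop) :
    ∑ x ∈ univ.image X, pr μ {ω | X ω = x ∧ P ω} = pr μ {ω | P ω} := by
  classical
  unfold pr
  rw [Finset.sum_comm]
  apply Finset.sum_congr rfl; intro ω _
  by_cases hP : P ω
  · calc ∑ x ∈ univ.image X, ({ω' | X ω' = x ∧ P ω'}.indicator μ ω)
        = ∑ x ∈ univ.image X, (if X ω = x then μ ω else 0) := by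
          apply Finset.sum_congr rfl; intro x _
          rw [indicator_eq_ite]
          simp only [Set.mem_setOf_eq, hP, and_true]
      _ = μ ω := by
          rw [Finset.sum_ite_eq]
          simp [Finset.mem_image]
      _ = ({ω' | P ω'}.indicator μ) ω := (Set.indicator_of_mem hP μ).symm
  · have h1 : ∀ x : α, ({ω' | X ω' = x ∧ P ω'}.indicator μ) ω = 0 := fun x =>
      Set.indicator_of_notMem (fun hc => hP hc.2) μ
    have h2 : ({ω' | P ω'}.indicator μ) ω = 0 := Set.indicator_of_notMem hP μ
    simp [h1, h2]

lemma pr_fiber_sum [DecidableEq γ] (V : Ω → γ) (v : γ) :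
    ∑ ω ∈ univ.filter (fun ω => V ω = v), μ ω = pr μ {ω | V ω = v} := by
  rw [Finset.sum_filter]
  unfold pr
  apply Finset.sum_congr rfl; intro ω _
  by_cases h : V ω = v
  · rw [Set.indicator_of_mem (show ω ∈ {ω' | V ω' = v} from h) μ]; simp [h]
  · rw [Set.indicator_of_notMem (show ω ∉ {ω' | V ω' = v} from h) μ]; simp [h]

lemma ent_submod (hq : 1 < (q : ℝ)) (h0 : ∀ ω, 0 ≤ μ ω) (h1 : ∑ ω, μ ω = 1)
    (X : Ω → α) (Y : Ω → β) (Z : Ω → γ) :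
    ent q μ (fun ω => (X ω, Y ω, Z ω)) + ent q μ Z
      ≤ ent q μ (fun ω => (X ω, Z ω)) + ent q μ (fun ω => (Y ω, Z ω)) := by
  classical
  have hlogq : 0 < Real.log q := Real.log_pos hq
  set a : Ω → ℝ := fun ω => pr μ {ω' | X ω' = X ω ∧ Z ω' = Z ω} with ha
  set b : Ω → ℝ := fun ω => pr μ {ω' | Y ω' = Y ω ∧ Z ω' = Z ω} with hb
  set c : Ω → ℝ := fun ω => pr μ {ω' | X ω' = X ω ∧ Y ω' = Y ω ∧ Z ω' = Z ω} with hc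
  set d : Ω → ℝ := fun ω => pr μ {ω' | Z ω' = Z ω} with hd
  set r : Ω → ℝ := fun ω => a ω * b ω / (c ω * d ω) with hr
  -- the main combinatorial bound
  have main : ∑ ω, μ ω * r ω ≤ 1 := by
    set V : Ω → α × β × γ := fun ω => (X ω, Y ω, Z ω) with hV
    have habcd : ∀ ω, r ω = pr μ {ω'' | X ω'' = (V ω).1 ∧ Z ω'' = (V ω).2.2}
        * pr μ {ω'' | Y ω'' = (V ω).2.1 ∧ Z ω'' = (V ω).2.2}
        / (pr μ {ω'' | X ω'' = (V ω).1 ∧ Y ω'' = (V ω).2.1 ∧ Z ω'' = (V ω).2.2}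
          * pr μ {ω'' | Z ω'' = (V ω).2.2}) := fun ω => rfl
    calc ∑ ω, μ ω * r ω
        = ∑ v ∈ univ.image V, ∑ ω ∈ univ.filter (fun ω => V ω = v), μ ω * r ω :=
          (Finset.sum_fiberwise_of_maps_to (fun ω _ => mem_image_of_mem V (mem_univ ω)) _).symm
      _ = ∑ v ∈ univ.image V, pr μ {ω | X ω = v.1 ∧ Y ω = v.2.1 ∧ Z ω = v.2.2}
            * (pr μ {ω | X ω = v.1 ∧ Z ω = v.2.2} * pr μ {ω | Y ω = v.2.1 ∧ Z ω = v.2.2}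
              / (pr μ {ω | X ω = v.1 ∧ Y ω = v.2.1 ∧ Z ω = v.2.2} * pr μ {ω | Z ω = v.2.2})) := by
          apply Finset.sum_congr rfl; intro v _
          have hfib : ∑ ω ∈ univ.filter (fun ω => V ω = v), μ ω
              = pr μ {ω | X ω = v.1 ∧ Y ω = v.2.1 ∧ Z ω = v.2.2} := by
            rw [pr_fiber_sum V v]
            exact pr_congr (fun ω => by simp [hV, Set.mem_setOf_eq, Prod.ext_iff])
          rw [← hfib, Finset.sum_mul]
          apply Finset.sum_congr rfl; intro ω hω
          have hv : V ω = v := (Finset.mem_filter.1 hω).2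
          rw [habcd ω, hv, hfib]
      _ ≤ ∑ v ∈ univ.image V, pr μ {ω | X ω = v.1 ∧ Z ω = v.2.2}
            * pr μ {ω | Y ω = v.2.1 ∧ Z ω = v.2.2} / pr μ {ω | Z ω = v.2.2} := by
          apply Finset.sum_le_sum; intro v _
          by_cases hCv : pr μ {ω | X ω = v.1 ∧ Y ω = v.2.1 ∧ Z ω = v.2.2} = 0
          · rw [hCv, zero_mul]
            exact div_nonneg (mul_nonneg (pr_nonneg h0 _) (pr_nonneg h0 _)) (pr_nonneg h0 _)
          · have hDv : pr μ {ω | Z ω = v.2.2} ≠ 0 := by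
              intro hD0
              apply hCv
              have h1' : pr μ {ω | X ω = v.1 ∧ Y ω = v.2.1 ∧ Z ω = v.2.2}
                  ≤ pr μ {ω | Z ω = v.2.2} := pr_mono h0 (fun ω hω => hω.2.2)
              have h2' := pr_nonneg h0 (μ := μ) {ω | X ω = v.1 ∧ Y ω = v.2.1 ∧ Z ω = v.2.2}
              linarith [hD0 ▸ h1']
            rw [le_iff_lt_or_eq]; right
            field_simp
      _ ≤ ∑ v ∈ (univ.image X) ×ˢ ((univ.image Y) ×ˢ (univ.image Z)),
            pr μ {ω | X ω = v.1 ∧ Z ω = v.2.2} * pr μ {ω | Y ω = v.2.1 ∧ Z ω = v.2.2}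
              / pr μ {ω | Z ω = v.2.2} := by
          apply Finset.sum_le_sum_of_subset_of_nonneg
          · intro v hv
            rcases Finset.mem_image.1 hv with ⟨ω, _, rfl⟩
            simp [Finset.mem_product, hV]
          · intro v _ _
            exact div_nonneg (mul_nonneg (pr_nonneg h0 _) (pr_nonneg h0 _)) (pr_nonneg h0 _)
      _ = ∑ x ∈ univ.image X, ∑ y ∈ univ.image Y, ∑ z ∈ univ.image Z,
            pr μ {ω | X ω = x ∧ Z ω = z} * pr μ {ω | Y ω = y ∧ Z ω = z}
              / pr μ {ω | Z ω = z} := by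
          rw [Finset.sum_product]
          apply Finset.sum_congr rfl; intro x _
          rw [Finset.sum_product]
      _ = ∑ z ∈ univ.image Z, ∑ x ∈ univ.image X, ∑ y ∈ univ.image Y,
            pr μ {ω | X ω = x ∧ Z ω = z} * pr μ {ω | Y ω = y ∧ Z ω = z}
              / pr μ {ω | Z ω = z} := by
          have hswap : ∀ x ∈ univ.image X,
              (∑ y ∈ univ.image Y, ∑ z ∈ univ.image Z,
                pr μ {ω | X ω = x ∧ Z ω = z} * pr μ {ω | Y ω = y ∧ Z ω = z}
                  / pr μ {ω | Z ω = z})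
              = ∑ z ∈ univ.image Z, ∑ y ∈ univ.image Y,
                pr μ {ω | X ω = x ∧ Z ω = z} * pr μ {ω | Y ω = y ∧ Z ω = z}
                  / pr μ {ω | Z ω = z} := fun x _ => Finset.sum_comm
          rw [Finset.sum_congr rfl hswap, Finset.sum_comm]
      _ ≤ ∑ z ∈ univ.image Z, pr μ {ω | Z ω = z} := by
          apply Finset.sum_le_sum; intro z _
          have e1 : ∑ x ∈ univ.image X, ∑ y ∈ univ.image Y,
              pr μ {ω | X ω = x ∧ Z ω = z} * pr μ {ω | Y ω = y ∧ Z ω = z}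
                / pr μ {ω | Z ω = z}
              = (∑ x ∈ univ.image X, pr μ {ω | X ω = x ∧ Z ω = z})
                * ((∑ y ∈ univ.image Y, pr μ {ω | Y ω = y ∧ Z ω = z})
                  / pr μ {ω | Z ω = z}) := by
            rw [Finset.sum_mul]
            apply Finset.sum_congr rfl; intro x _
            rw [Finset.sum_div, Finset.mul_sum]
            apply Finset.sum_congr rfl; intro y _
            rw [mul_div_assoc]
          rw [e1, sum_pr_eq X (fun ω => Z ω = z), sum_pr_eq Y (fun ω => Z ω = z)]
          by_cases hz : pr μ {ω | Z ω = z} = 0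
          · rw [hz]; simp
          · rw [div_self hz, mul_one]
      _ = 1 := by
          have := sum_pr_eq (μ := μ) Z (fun _ => True)
          simp only [and_true] at this
          rw [this]
          have : pr μ {ω : Ω | True} = pr μ (Set.univ : Set Ω) := pr_congr (fun ω => by simp)
          rw [this, pr_univ h1]
  -- from the combinatorial bound to the entropy inequality
  have pos : ∀ ω, 0 < μ ω → 0 < a ω ∧ 0 < b ω ∧ 0 < c ω ∧ 0 < d ω := by
    intro ω hμ
    exact ⟨lt_of_lt_of_le hμ (le_pr h0 ⟨rfl, rfl⟩),
      lt_of_lt_of_le hμ (le_pr h0 ⟨rfl, rfl⟩),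
      lt_of_lt_of_le hμ (le_pr h0 ⟨rfl, rfl, rfl⟩),
      lt_of_lt_of_le hμ (le_pr h0 rfl)⟩
  have split : ∀ ω : Ω, μ ω * Real.logb q (a ω) + μ ω * Real.logb q (b ω)
      - μ ω * Real.logb q (c ω) - μ ω * Real.logb q (d ω) = μ ω * Real.logb q (r ω) := by
    intro ω
    rcases eq_or_lt_of_le (h0 ω) with hμ | hμ
    · rw [← hμ]; ring
    · obtain ⟨hA, hB, hC, hD⟩ := pos ω hμ
      rw [hr]
      simp only []
      rw [Real.logb_div (by positivity) (by positivity),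
        Real.logb_mul (ne_of_gt hA) (ne_of_gt hB),
        Real.logb_mul (ne_of_gt hC) (ne_of_gt hD)]
      ring
  have bound : ∀ ω : Ω, μ ω * Real.logb q (r ω) ≤ μ ω * ((r ω - 1) / Real.log q) := by
    intro ω
    rcases eq_or_lt_of_le (h0 ω) with hμ | hμ
    · rw [← hμ]; simp
    · obtain ⟨hA, hB, hC, hD⟩ := pos ω hμ
      have hrpos : 0 < r ω := by rw [hr]; positivity
      have hlog : Real.log (r ω) ≤ r ω - 1 := Real.log_le_sub_one_of_pos hrpos
      have : Real.logb q (r ω) ≤ (r ω - 1) / Real.log q := by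
        unfold Real.logb
        exact (div_le_div_iff_of_pos_right hlogq).2 hlog
      exact mul_le_mul_of_nonneg_left this (le_of_lt hμ)
  have key : ∑ ω, μ ω * Real.logb q (r ω) ≤ 0 := by
    calc ∑ ω, μ ω * Real.logb q (r ω) ≤ ∑ ω, μ ω * ((r ω - 1) / Real.log q) :=
          Finset.sum_le_sum (fun ω _ => bound ω)
      _ = (∑ ω, μ ω * r ω - 1) / Real.log q := by
          rw [eq_div_iff (ne_of_gt hlogq), Finset.sum_mul]
          have hterm : ∀ ω : Ω, μ ω * ((r ω - 1) / Real.log q) * Real.log q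
              = μ ω * r ω - μ ω := by
            intro ω; field_simp
          rw [Finset.sum_congr rfl (fun ω _ => hterm ω), Finset.sum_sub_distrib, h1]
      _ ≤ 0 := div_nonpos_of_nonpos_of_nonneg (by linarith) (le_of_lt hlogq)
  have eXZ : ent q μ (fun ω => (X ω, Z ω)) = -∑ ω, μ ω * Real.logb q (a ω) := by
    unfold ent; congr 1; apply Finset.sum_congr rfl; intro ω _
    congr 2
    exact pr_congr (fun ω' => by simp [Prod.ext_iff])
  have eYZ : ent q μ (fun ω => (Y ω, Z ω)) = -∑ ω, μ ω * Real.logb q (b ω) := by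
    unfold ent; congr 1; apply Finset.sum_congr rfl; intro ω _
    congr 2
    exact pr_congr (fun ω' => by simp [Prod.ext_iff])
  have eXYZ : ent q μ (fun ω => (X ω, Y ω, Z ω)) = -∑ ω, μ ω * Real.logb q (c ω) := by
    unfold ent; congr 1; apply Finset.sum_congr rfl; intro ω _
    congr 2
    exact pr_congr (fun ω' => by simp [Prod.ext_iff])
  have eZ : ent q μ Z = -∑ ω, μ ω * Real.logb q (d ω) := rfl
  rw [eXZ, eYZ, eXYZ, eZ]
  have sums : ∑ ω, μ ω * Real.logb q (a ω) + ∑ ω, μ ω * Real.logb q (b ω)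
      - ∑ ω, μ ω * Real.logb q (c ω) - ∑ ω, μ ω * Real.logb q (d ω)
      = ∑ ω, μ ω * Real.logb q (r ω) := by
    rw [← Finset.sum_add_distrib, ← Finset.sum_sub_distrib, ← Finset.sum_sub_distrib]
    exact Finset.sum_congr rfl (fun ω _ => split ω)
  linarith

lemma condEnt_le_of_fn (hq : 1 < (q : ℝ)) (h0 : ∀ ω, 0 ≤ μ ω) (h1 : ∑ ω, μ ω = 1)
    {X : Ω → α} {Y : Ω → β} {Z : Ω → γ} (h : ∀ ω ω', Y ω' = Y ω → Z ω' = Z ω) :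
    condEnt q μ X Y ≤ condEnt q μ X Z := by
  have hs := ent_submod hq h0 h1 X Y Z
  have e1 : ent q μ (fun ω => (X ω, Y ω, Z ω)) = ent q μ (fun ω => (X ω, Y ω)) :=
    ent_congr (fun ω ω' => by
      simp only [Prod.ext_iff]
      exact ⟨fun hh => ⟨hh.1, hh.2.1⟩, fun hh => ⟨hh.1, hh.2, h ω ω' hh.2⟩⟩)
  have e2 : ent q μ (fun ω => (Y ω, Z ω)) = ent q μ Y :=
    ent_congr (fun ω ω' => by
      simp only [Prod.ext_iff]
      exact ⟨fun hh => hh.1, fun hh => ⟨hh, h ω ω' hh⟩⟩)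
  unfold condEnt
  linarith

lemma condEnt_pair_le (hq : 1 < (q : ℝ)) (h0 : ∀ ω, 0 ≤ μ ω) (h1 : ∑ ω, μ ω = 1)
    (X : Ω → α) (Y : Ω → β) (Z : Ω → γ) :
    condEnt q μ (fun ω => (X ω, Y ω)) Z ≤ condEnt q μ X Z + condEnt q μ Y Z := by
  have hs := ent_submod hq h0 h1 X Y Z
  have e : ent q μ (fun ω => ((X ω, Y ω), Z ω)) = ent q μ (fun ω => (X ω, Y ω, Z ω)) :=
    ent_congr (fun ω ω' => by simp only [Prod.ext_iff]; tauto)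
  unfold condEnt
  linarith

lemma condEnt_pair_of_indep (hq : 1 < (q : ℝ)) (h0 : ∀ ω, 0 ≤ μ ω)
    (X : Ω → α) (Y : Ω → β) (Z : Ω → γ)
    (h : ∀ ω, pr μ {ω' | X ω' = X ω ∧ Y ω' = Y ω ∧ Z ω' = Z ω}
        = pr μ {ω' | X ω' = X ω} * (pr μ {ω' | Y ω' = Y ω} * pr μ {ω' | Z ω' = Z ω})) :
    condEnt q μ (fun ω => (X ω, Y ω)) Z = ent q μ X + ent q μ Y := by
  have e1 : ent q μ (fun ω => ((X ω, Y ω), Z ω))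
      = -∑ ω, μ ω * Real.logb q (pr μ {ω' | X ω' = X ω ∧ Y ω' = Y ω ∧ Z ω' = Z ω}) := by
    unfold ent; congr 1; apply Finset.sum_congr rfl; intro ω _
    congr 2
    exact pr_congr (fun ω' => by simp [Prod.ext_iff, and_assoc])
  have e2 : ∀ ω : Ω, μ ω * Real.logb q (pr μ {ω' | X ω' = X ω ∧ Y ω' = Y ω ∧ Z ω' = Z ω})
      = μ ω * Real.logb q (pr μ {ω' | X ω' = X ω})
        + μ ω * Real.logb q (pr μ {ω' | Y ω' = Y ω})
        + μ ω * Real.logb q (pr μ {ω' | Z ω' = Z ω}) := by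
    intro ω
    rcases eq_or_lt_of_le (h0 ω) with hμ | hμ
    · rw [← hμ]; ring
    · have hx : 0 < pr μ {ω' | X ω' = X ω} := lt_of_lt_of_le hμ (le_pr h0 rfl)
      have hy : 0 < pr μ {ω' | Y ω' = Y ω} := lt_of_lt_of_le hμ (le_pr h0 rfl)
      have hz : 0 < pr μ {ω' | Z ω' = Z ω} := lt_of_lt_of_le hμ (le_pr h0 rfl)
      rw [h ω, Real.logb_mul (ne_of_gt hx) (by positivity),
        Real.logb_mul (ne_of_gt hy) (ne_of_gt hz)]
      ring
  have e3 : ent q μ (fun ω => ((X ω, Y ω), Z ω)) = ent q μ X + ent q μ Y + ent q μ Z := by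
    rw [e1]
    unfold ent
    rw [Finset.sum_congr rfl (fun ω _ => e2 ω), Finset.sum_add_distrib, Finset.sum_add_distrib]
    ring
  unfold condEnt
  rw [e3]
  ring

lemma card_filter_mem {κ : Type*} [Fintype κ] (p : κ → Prop) [DecidablePred p]
    [DecidablePred (· ∈ {v | p v})] :
    (univ.filter (· ∈ {v | p v})).card = (univ.filter p).card := by
  congr 1
  apply Finset.filter_congr
  intro v _
  exact Iff.rfl

lemma pr_mem_univ {κ : Type*} (X : Ω → κ) (h1 : ∑ ω, μ ω = 1) :
    pr μ {ω | X ω ∈ (Set.univ : Set κ)} = 1 := by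
  have e : pr μ {ω | X ω ∈ (Set.univ : Set κ)} = pr μ (Set.univ : Set Ω) :=
    pr_congr (fun ω => by simp)
  rw [e, pr_univ h1]

lemma pr_mem_eq_sum {κ : Type*} [Fintype κ] [DecidableEq κ] (X : Ω → κ) (t : Set κ)
    [DecidablePred (· ∈ t)] :
    pr μ {ω | X ω ∈ t} = ∑ v ∈ univ.filter (· ∈ t), pr μ {ω | X ω = v} := by
  classical
  unfold pr
  rw [Finset.sum_comm]
  apply Finset.sum_congr rfl; intro ω _
  symm
  by_cases ht : X ω ∈ t
  · calc ∑ v ∈ univ.filter (· ∈ t), ({ω' | X ω' = v}.indicator μ) ω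
        = ∑ v ∈ univ.filter (· ∈ t), if X ω = v then μ ω else 0 := by
          apply Finset.sum_congr rfl; intro v _
          by_cases hv : X ω = v
          · rw [Set.indicator_of_mem (show ω ∈ {ω' | X ω' = v} from hv) μ]; simp [hv]
          · rw [Set.indicator_of_notMem (show ω ∉ {ω' | X ω' = v} from hv) μ]; simp [hv]
      _ = μ ω := by rw [Finset.sum_ite_eq]; simp [ht]
      _ = ({ω' | X ω' ∈ t}.indicator μ) ω :=
          (Set.indicator_of_mem (show ω ∈ {ω' | X ω' ∈ t} from ht) μ).symm
  · have hz : ∀ v ∈ univ.filter (· ∈ t), ({ω' | X ω' = v}.indicator μ) ω = 0 := by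
      intro v hv
      have : ω ∉ {ω' | X ω' = v} := fun hc => ht (by
        rw [show X ω = v from hc]; exact (Finset.mem_filter.1 hv).2)
      exact Set.indicator_of_notMem this μ
    rw [Finset.sum_congr rfl hz]
    rw [Set.indicator_of_notMem (show ω ∉ {ω' | X ω' ∈ t} from ht) μ]
    simp

/-- Functions on `Fin K` with a fixed value at `k` correspond to functions off `k`. -/
def fixAtEquiv {K : ℕ} {M : Type*} (k : Fin K) (w : M) :
    {v : Fin K → M // v k = w} ≃ ({m : Fin K // m ≠ k} → M) where
  toFun v m := v.1 m.1
  invFun g := ⟨fun m => if h : m = k then w else g ⟨m, h⟩, by simp⟩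
  left_inv v := by
    apply Subtype.ext; funext m
    by_cases h : m = k
    · subst h; simp [v.2]
    · simp [h]
  right_inv g := by
    funext m
    simp [m.2]

/-- Functions on `Fin K` with fixed values off `k` correspond to their value at `k`. -/
def fixOffEquiv {K : ℕ} {M : Type*} (k : Fin K) (g : {m : Fin K // m ≠ k} → M) :
    {v : Fin K → M // ∀ m : {m : Fin K // m ≠ k}, v m.1 = g m} ≃ M where
  toFun v := v.1 k
  invFun x := ⟨fun m => if h : m = k then x else g ⟨m, h⟩, fun m => by simp [m.2]⟩
  left_inv v := by
    apply Subtype.ext; funext m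
    by_cases h : m = k
    · subst h; simp
    · simp only [dif_neg h]
      exact (v.2 ⟨m, h⟩).symm
  right_inv x := by simp

end submod



/-- A symmetric private information retrieval (SPIR) scheme on a graph-replicated
database, following the system model:  `N` servers are the vertices of a simple graph
whose `K` edges are messages; message `W k` (uniform on `F^L`) and the message-specific
common randomness `R k` are stored exactly at the two endpoints `e1 k`, `e2 k` of
edge `k`.  All Shannon quantities are in `q`-ary units, `q = |F|`. -/
structure Scheme (q N K L : ℕ) (F : Type) [Field F] [Fintype F]
    (Ω : Type) [Fintype Ω] where
  /-- the underlying probability mass function -/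
  μ : Ω → ℝ
  μ_nonneg : ∀ ω, 0 ≤ μ ω
  μ_sum : ∑ ω, μ ω = 1
  card_F : Fintype.card F = q
  /-- first endpoint of each edge (message) -/
  e1 : Fin K → Fin N
  /-- second endpoint of each edge (message) -/
  e2 : Fin K → Fin N
  edge_ne : ∀ k, e1 k ≠ e2 k
  /-- the graph is simple: distinct edges have distinct endpoint sets -/
  edge_inj : ∀ k k', ({e1 k, e2 k} : Set (Fin N)) = {e1 k', e2 k'} → k = k'
  /-- alphabet of the queries -/
  QT : Type
  /-- alphabet of the answers -/
  AT : Type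
  /-- alphabet of the common randomness -/
  RT : Type
  /-- alphabet of the user's query randomness -/
  UT : Type
  /-- the messages -/
  W : Fin K → Ω → Fin L → F
  /-- the message-specific common randomness -/
  R : Fin K → Ω → RT
  /-- the user's query randomness `𝒬` -/
  U : Ω → UT
  /-- `Q n k` : query sent to server `n` when the desired message index is `k` -/
  Q : Fin N → Fin K → Ω → QT
  /-- `A n k` : answer of server `n` when the desired message index is `k` -/
  A : Fin N → Fin K → Ω → AT
  /-- the messages are jointly independent, each uniform on `F^L` -/
  W_unif : ∀ w : Fin K → Fin L → F,
    pr μ {ω | (fun k => W k ω) = w} = (1 / (q : ℝ) ^ L) ^ K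
  /-- the common randomness variables are jointly independent of each other and of the
  messages -/
  R_indep : ∀ (s : Fin K → Set RT) (t : Set (Fin K → Fin L → F)),
    pr μ {ω | (fun k => W k ω) ∈ t ∧ ∀ k, R k ω ∈ s k}
      = pr μ {ω | (fun k => W k ω) ∈ t} * ∏ k, pr μ {ω | R k ω ∈ s k}
  /-- the common randomness variables are identically distributed -/
  R_ident : ∀ k k', IdentDist μ (R k) (R k')
  /-- the user's query randomness is independent of `(𝒲, ℛ)` -/
  U_indep : IndepRV μ U (fun ω => (fun k => W k ω, fun k => R k ω))
  /-- the queries are a deterministic function of `𝒬` -/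
  query_det : ∀ k, condEnt q μ (fun ω (n : Fin N) => Q n k ω) U = 0
  /-- the answer of a server is a deterministic function of its query, its stored
  messages `𝒲ₙ` and its stored randomness `ℛₙ` -/
  answer_det : ∀ n k, condEnt q μ (A n k)
    (fun ω => (Q n k ω,
      fun j : {j : Fin K // e1 j = n ∨ e2 j = n} => W j ω,
      fun j : {j : Fin K // e1 j = n ∨ e2 j = n} => R j ω)) = 0
  /-- user privacy: `(Qₙ^[k], Aₙ^[k], 𝒲ₙ, ℛₙ)` has the same distribution for all `k` -/
  user_privacy : ∀ (n : Fin N) (k k' : Fin K), IdentDist μ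
    (fun ω => (Q n k ω, A n k ω,
      fun j : {j : Fin K // e1 j = n ∨ e2 j = n} => W j ω,
      fun j : {j : Fin K // e1 j = n ∨ e2 j = n} => R j ω))
    (fun ω => (Q n k' ω, A n k' ω,
      fun j : {j : Fin K // e1 j = n ∨ e2 j = n} => W j ω,
      fun j : {j : Fin K // e1 j = n ∨ e2 j = n} => R j ω))
  /-- reliability: the desired message is recovered from all answers and `𝒬` -/
  reliability : ∀ k, condEnt q μ (W k)
    (fun ω => (fun n : Fin N => A n k ω, U ω)) = 0
  /-- database privacy -/
  db_privacy : ∀ (k : Fin K) (J : Set (Fin K)), k ∉ J →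
    mutInf q μ (fun ω => fun j : J => W j ω)
      (fun ω => (fun n : Fin N => A n k ω,
        fun n : Fin N => Q n k ω,
        fun ℓ : {ℓ : Fin K // ℓ ∉ J} => R ℓ ω,
        fun ℓ : {ℓ : Fin K // ℓ ∉ J ∧ ℓ ≠ k} => W ℓ ω,
        U ω)) = 0
  /-- randomness recoverability at each server storing `R j` -/
  rand_recov : ∀ (k j : Fin K) (n : Fin N), (e1 j = n ∨ e2 j = n) →
    condEnt q μ (R j)
      (fun ω => (A n k ω,
        fun m : {m : Fin K // e1 m = n ∨ e2 m = n} => W m ω,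
        fun m : {m : Fin K // (e1 m = n ∨ e2 m = n) ∧ m ≠ j} => R m ω,
        Q n k ω)) = 0

/-- The simple graph underlying an SPIR scheme. -/
def schemeGraph {q N K L : ℕ} {F : Type} [Field F] [Fintype F]
    {Ω : Type} [Fintype Ω] (S : Scheme q N K L F Ω) : SimpleGraph (Fin N) :=
  SimpleGraph.fromRel (fun i j => ∃ k, S.e1 k = i ∧ S.e2 k = j)


/-- **Lemma 3.** For the two servers `i = e1 k` and `j = e2 k` sharing message `W k`
and randomness `R k`:
`H(A_i^[k]|𝒬) + H(A_j^[k]|𝒬)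
  ≥ H(A_i^[k]|R_k̄, W_k̄, 𝒬) + H(A_j^[k]|R_k̄, W_k̄, 𝒬) ≥ (1 + ρ)·L`,
where `ρ = H(R k)/L`. -/
theorem sum_entropy_of_answers
    {q N K L : ℕ} {F : Type} [Field F] [Fintype F] {Ω : Type} [Fintype Ω]
    (hN : 3 ≤ N) (hK : 2 ≤ K) (hL : 1 ≤ L)
    (S : Scheme q N K L F Ω) (k : Fin K) (i j : Fin N)
    (hi : S.e1 k = i) (hj : S.e2 k = j) :
    (condEnt q S.μ (S.A i k)
        (fun ω => (fun m : {m : Fin K // m ≠ k} => S.R m ω,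
                   fun m : {m : Fin K // m ≠ k} => S.W m ω, S.U ω))
      + condEnt q S.μ (S.A j k)
        (fun ω => (fun m : {m : Fin K // m ≠ k} => S.R m ω,
                   fun m : {m : Fin K // m ≠ k} => S.W m ω, S.U ω))
      ≤ condEnt q S.μ (S.A i k) S.U + condEnt q S.μ (S.A j k) S.U) ∧
    ((1 + ent q S.μ (S.R k) / L) * L
      ≤ condEnt q S.μ (S.A i k)
          (fun ω => (fun m : {m : Fin K // m ≠ k} => S.R m ω,
                     fun m : {m : Fin K // m ≠ k} => S.W m ω, S.U ω))
        + condEnt q S.μ (S.A j k)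
          (fun ω => (fun m : {m : Fin K // m ≠ k} => S.R m ω,
                     fun m : {m : Fin K // m ≠ k} => S.W m ω, S.U ω))) := by
 classical
  have h0 := S.μ_nonneg
  have h1 := S.μ_sum
  have hq : 1 < ((q : ℕ) : ℝ) := by
    have h2 : 1 < q := by
      have h3 := Fintype.one_lt_card (α := F)
      rw [S.card_F] at h3; exact h3
    exact_mod_cast h2
  set B : Ω → (({m : Fin K // m ≠ k} → S.RT) × ({m : Fin K // m ≠ k} → Fin L → F) × S.UT) :=
    fun ω => (fun m : {m : Fin K // m ≠ k} => S.R m ω,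
              fun m : {m : Fin K // m ≠ k} => S.W m ω, S.U ω) with hBdef
  constructor
  · exact add_le_add
      (condEnt_le_of_fn hq h0 h1 (fun ω ω' hY => congrArg (fun p => p.2.2) hY))
      (condEnt_le_of_fn hq h0 h1 (fun ω ω' hY => congrArg (fun p => p.2.2) hY))
  · set Xp : Ω → S.AT × S.AT := fun ω => (S.A i k ω, S.A j k ω) with hXp
    set Yp : Ω → (Fin L → F) × S.RT := fun ω => (S.W k ω, S.R k ω) with hYp
    set Z2 : Ω → (S.AT × S.AT) × (({m : Fin K // m ≠ k} → S.RT) × ({m : Fin K // m ≠ k} → Fin L → F) × S.UT) :=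
      fun ω => (Xp ω, B ω) with hZ2
    set YB : Ω → ((Fin L → F) × S.RT) × (({m : Fin K // m ≠ k} → S.RT) × ({m : Fin K // m ≠ k} → Fin L → F) × S.UT) :=
      fun ω => (Yp ω, B ω) with hYB
    -- determinism facts
    have hdetQ : Det S.μ (fun ω (n : Fin N) => S.Q n k ω) S.U :=
      (condEnt_eq_zero_iff hq h0).1 (S.query_det k)
    have hdetU : Det S.μ S.U Z2 := det_of_fn (fun ω ω' hh => congrArg (fun p => p.2.2.2) hh)
    have hdetQn : ∀ n : Fin N, Det S.μ (S.Q n k) Z2 := fun n =>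
      det_trans (det_map (fun f => f n) hdetQ) hdetU
    have hdetWm : ∀ m : Fin K, m ≠ k → Det S.μ (S.W m) Z2 := fun m hm =>
      det_of_fn (fun ω ω' hh => congrArg (fun p => p.2.2.1 ⟨m, hm⟩) hh)
    have hdetRm : ∀ m : Fin K, m ≠ k → Det S.μ (S.R m) Z2 := fun m hm =>
      det_of_fn (fun ω ω' hh => congrArg (fun p => p.2.1 ⟨m, hm⟩) hh)
    have hdetAn : ∀ n : Fin N, Det S.μ (S.A n k) Z2 := by
      intro n
      by_cases hni : n = i
      · subst hni; exact det_of_fn (fun ω ω' hh => congrArg (fun p => p.1.1) hh)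
      by_cases hnj : n = j
      · subst hnj; exact det_of_fn (fun ω ω' hh => congrArg (fun p => p.1.2) hh)
      have ha : Det S.μ (S.A n k) (fun ω => (S.Q n k ω,
          fun j' : {j' : Fin K // S.e1 j' = n ∨ S.e2 j' = n} => S.W j' ω,
          fun j' : {j' : Fin K // S.e1 j' = n ∨ S.e2 j' = n} => S.R j' ω)) :=
        (condEnt_eq_zero_iff hq h0).1 (S.answer_det n k)
      have hne : ∀ m : {j' : Fin K // S.e1 j' = n ∨ S.e2 j' = n}, (m : Fin K) ≠ k := by
        intro m hmk
        rcases m.2 with h' | h'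
        · rw [hmk, hi] at h'; exact hni h'.symm
        · rw [hmk, hj] at h'; exact hnj h'.symm
      exact det_trans ha (det_pair (hdetQn n) (det_pair
        (det_pi (fun m => hdetWm m.1 (hne m)))
        (det_pi (fun m => hdetRm m.1 (hne m)))))
    have hdetWk : Det S.μ (S.W k) Z2 :=
      det_trans ((condEnt_eq_zero_iff hq h0).1 (S.reliability k))
        (det_pair (det_pi hdetAn) hdetU)
    have hdetRk : Det S.μ (S.R k) Z2 := by
      have hrr : Det S.μ (S.R k) (fun ω => (S.A i k ω,
          fun m : {m : Fin K // S.e1 m = i ∨ S.e2 m = i} => S.W m ω,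
          fun m : {m : Fin K // (S.e1 m = i ∨ S.e2 m = i) ∧ m ≠ k} => S.R m ω,
          S.Q i k ω)) := (condEnt_eq_zero_iff hq h0).1 (S.rand_recov k k i (Or.inl hi))
      refine det_trans hrr (det_pair (det_of_fn (fun ω ω' hh => congrArg (fun p => p.1.1) hh))
        (det_pair (det_pi (fun m => ?_))
          (det_pair (det_pi (fun m => hdetRm m.1 m.2.2)) (hdetQn i))))
      by_cases hmk : (m : Fin K) = k
      · rw [hmk]; exact hdetWk
      · exact hdetWm m.1 hmk
    have step4 : condEnt q S.μ Yp Z2 = 0 :=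
      (condEnt_eq_zero_iff hq h0).2 (det_pair hdetWk hdetRk)
    have step3 : 0 ≤ condEnt q S.μ Xp YB := condEnt_nonneg hq h0 _ _
    have step1 : condEnt q S.μ Xp B
        ≤ condEnt q S.μ (S.A i k) B + condEnt q S.μ (S.A j k) B :=
      condEnt_pair_le hq h0 h1 _ _ _
    have ecross : ent q S.μ (fun ω => (Yp ω, Z2 ω)) = ent q S.μ (fun ω => (Xp ω, YB ω)) :=
      ent_congr (fun ω ω' => by
        simp only [hZ2, hYB, Prod.ext_iff]
        tauto)
    have step2 : condEnt q S.μ Yp B - condEnt q S.μ Yp Z2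
        = condEnt q S.μ Xp B - condEnt q S.μ Xp YB := by
      have eZ2 : ent q S.μ Z2 = ent q S.μ (fun ω => (Xp ω, B ω)) := by rw [hZ2]
      have eYB : ent q S.μ YB = ent q S.μ (fun ω => (Yp ω, B ω)) := by rw [hYB]
      unfold condEnt
      linarith [ecross, eZ2, eYB]
    have hq0 : (0:ℝ) < (q:ℝ) := lt_trans one_pos hq
    have hK1 : 1 ≤ K := le_trans one_le_two hK
    have hxx : ((q:ℝ)^L)^(K-1) * ((q:ℝ)^L) = ((q:ℝ)^L)^K := by
      rw [← pow_succ, Nat.sub_add_cancel hK1]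
    have hpowinv : ((q:ℝ)^L)^K * ((1:ℝ)/(q:ℝ)^L)^K = 1 := by
      rw [one_div, inv_pow, mul_inv_cancel₀ (by positivity)]
    have hWt : ∀ t : Set (Fin K → Fin L → F),
        pr S.μ {ω' | (fun m => S.W m ω') ∈ t}
          = ((univ.filter (· ∈ t)).card : ℝ) * (1 / (q:ℝ) ^ L) ^ K := by
      intro t
      have e := pr_mem_eq_sum (μ := S.μ) (X := fun ω' (m : Fin K) => S.W m ω') t
      rw [e, Finset.sum_congr rfl (fun v _ => S.W_unif v), Finset.sum_const, nsmul_eq_mul]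
    have hcardsub : Fintype.card {m : Fin K // m ≠ k} = K - 1 := by
      have h := Fintype.card_subtype_compl (p := fun m : Fin K => m = k)
      rw [Fintype.card_subtype_eq, Fintype.card_fin] at h
      exact h
    have hcardM : Fintype.card (Fin L → F) = q ^ L := by
      rw [Fintype.card_fun, S.card_F, Fintype.card_fin]
    have hcard1 : ∀ w : Fin L → F,
        (univ.filter (fun v : Fin K → Fin L → F => v k = w)).card = (q ^ L) ^ (K - 1) := by
      intro w
      rw [← Fintype.card_subtype, Fintype.card_congr (fixAtEquiv k w), Fintype.card_fun,
        hcardM, hcardsub]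
    have hcard3 : ∀ g : {m : Fin K // m ≠ k} → Fin L → F,
        (univ.filter (fun v : Fin K → Fin L → F =>
          ∀ m : {m : Fin K // m ≠ k}, v m = g m)).card = q ^ L := by
      intro g
      rw [← Fintype.card_subtype, Fintype.card_congr (fixOffEquiv k g), hcardM]
    have hcardb : ∀ (w : Fin L → F) (g : {m : Fin K // m ≠ k} → Fin L → F),
        (univ.filter (fun v : Fin K → Fin L → F =>
          v k = w ∧ ∀ m : {m : Fin K // m ≠ k}, v m = g m)).card = 1 := by
      intro w g
      rw [Finset.card_eq_one]
      refine ⟨fun m => if h : m = k then w else g ⟨m, h⟩, ?_⟩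
      ext v
      simp only [Finset.mem_filter, Finset.mem_univ, true_and, Finset.mem_singleton]
      constructor
      · rintro ⟨hv1, hv2⟩
        funext m
        by_cases h : m = k
        · subst h; simp [hv1]
        · rw [dif_neg h]; exact hv2 ⟨m, h⟩
      · rintro rfl
        refine ⟨by simp, fun m => ?_⟩
        simp [m.2]
    have hWkval : ∀ ω, pr S.μ {ω' | S.W k ω' = S.W k ω} = 1 / (q:ℝ)^L := by
      intro ω
      have e : pr S.μ {ω' | S.W k ω' = S.W k ω}
          = pr S.μ {ω' | (fun m => S.W m ω') ∈ {v : Fin K → Fin L → F | v k = S.W k ω}} :=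
        pr_congr (fun ω' => by simp)
      rw [e, hWt, card_filter_mem, hcard1 (S.W k ω)]
      push_cast
      calc ((q:ℝ)^L)^(K-1) * ((1:ℝ)/(q:ℝ)^L)^K
          = (((q:ℝ)^L)^(K-1) * ((q:ℝ)^L)) * ((1:ℝ)/(q:ℝ)^L)^K * (1/(q:ℝ)^L) := by
            rw [one_div]
            field_simp
        _ = 1 / (q:ℝ)^L := by rw [hxx, hpowinv, one_mul, one_div]
    have hfact0 : ∀ (t : Set (Fin K → Fin L → F)) (s : Fin K → Set S.RT) (uu : Set S.UT),
        pr S.μ {ω' | (fun m => S.W m ω') ∈ t ∧ (∀ m, S.R m ω' ∈ s m) ∧ S.U ω' ∈ uu}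
          = pr S.μ {ω' | (fun m => S.W m ω') ∈ t} * (∏ m, pr S.μ {ω' | S.R m ω' ∈ s m})
            * pr S.μ {ω' | S.U ω' ∈ uu} := by
      intro t s uu
      have e1 : pr S.μ {ω' | (fun m => S.W m ω') ∈ t ∧ (∀ m, S.R m ω' ∈ s m) ∧ S.U ω' ∈ uu}
          = pr S.μ (S.U ⁻¹' uu ∩ (fun ω' => (fun k' => S.W k' ω', fun k' => S.R k' ω')) ⁻¹'
              {p | p.1 ∈ t ∧ ∀ m, p.2 m ∈ s m}) :=
        pr_congr (fun ω' => by
          simp only [Set.mem_setOf_eq, Set.mem_inter_iff, Set.mem_preimage]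
          tauto)
      rw [e1, S.U_indep uu _]
      have e2 : pr S.μ ((fun ω' => (fun k' => S.W k' ω', fun k' => S.R k' ω')) ⁻¹'
          {p | p.1 ∈ t ∧ ∀ m, p.2 m ∈ s m})
          = pr S.μ {ω' | (fun m => S.W m ω') ∈ t ∧ ∀ m, S.R m ω' ∈ s m} :=
        pr_congr (fun ω' => by simp only [Set.mem_preimage, Set.mem_setOf_eq])
      rw [e2, S.R_indep s t]
      have e3 : pr S.μ (S.U ⁻¹' uu) = pr S.μ {ω' | S.U ω' ∈ uu} :=
        pr_congr (fun ω' => Iff.rfl)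
      rw [e3]; ring
    have step5 : condEnt q S.μ Yp B = ent q S.μ (S.W k) + ent q S.μ (S.R k) := by
      refine condEnt_pair_of_indep hq h0 (S.W k) (S.R k) B ?_
      intro ω
      set t1 : Set (Fin K → Fin L → F) := {v | v k = S.W k ω} with ht1
      set t3 : Set (Fin K → Fin L → F) :=
        {v | ∀ m : {m : Fin K // m ≠ k}, v m = S.W m ω} with ht3
      set tb : Set (Fin K → Fin L → F) :=
        {v | v k = S.W k ω ∧ ∀ m : {m : Fin K // m ≠ k}, v m = S.W m ω} with htb
      set s2 : Fin K → Set S.RT := fun m => if m = k then {S.R k ω} else Set.univ with hs2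
      set s3 : Fin K → Set S.RT := fun m => if m = k then Set.univ else {S.R m ω} with hs3
      have eJ : pr S.μ {ω' | S.W k ω' = S.W k ω ∧ S.R k ω' = S.R k ω ∧ B ω' = B ω}
          = pr S.μ {ω' | (fun m => S.W m ω') ∈ tb
              ∧ (∀ m, S.R m ω' ∈ ({S.R m ω} : Set S.RT)) ∧ S.U ω' ∈ ({S.U ω} : Set S.UT)} := by
        apply pr_congr
        intro ω'
        simp only [Set.mem_setOf_eq, hBdef, Prod.ext_iff, funext_iff, htb,
          Set.mem_singleton_iff]
        constructor
        · rintro ⟨hw1, hr1, hB1, hB2, hB3⟩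
          refine ⟨⟨hw1, fun m => hB2 m⟩, fun m => ?_, hB3⟩
          by_cases h : m = k
          · subst h; exact hr1
          · exact hB1 ⟨m, h⟩
        · rintro ⟨⟨hw1, hw2⟩, hr1, hu1⟩
          exact ⟨hw1, hr1 k, fun m => hr1 m.1, hw2, hu1⟩
      have eW1 : pr S.μ {ω' | S.W k ω' = S.W k ω}
          = pr S.μ {ω' | (fun m => S.W m ω') ∈ t1
              ∧ (∀ m, S.R m ω' ∈ (Set.univ : Set S.RT)) ∧ S.U ω' ∈ (Set.univ : Set S.UT)} :=
        pr_congr (fun ω' => by simp [ht1])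
      have eR1 : pr S.μ {ω' | S.R k ω' = S.R k ω}
          = pr S.μ {ω' | (fun m => S.W m ω') ∈ (Set.univ : Set (Fin K → Fin L → F))
              ∧ (∀ m, S.R m ω' ∈ s2 m) ∧ S.U ω' ∈ (Set.univ : Set S.UT)} := by
        apply pr_congr
        intro ω'
        simp only [Set.mem_setOf_eq, hs2, Set.mem_univ, true_and, and_true]
        constructor
        · intro h m
          by_cases hmk : m = k
          · subst hmk; simp [h]
          · simp [hmk]
        · intro h
          have := h k
          simpa using this
      have eB1 : pr S.μ {ω' | B ω' = B ω}
          = pr S.μ {ω' | (fun m => S.W m ω') ∈ t3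
              ∧ (∀ m, S.R m ω' ∈ s3 m) ∧ S.U ω' ∈ ({S.U ω} : Set S.UT)} := by
        apply pr_congr
        intro ω'
        simp only [Set.mem_setOf_eq, hBdef, Prod.ext_iff, funext_iff, ht3, hs3,
          Set.mem_singleton_iff]
        constructor
        · rintro ⟨h1', h2', h3'⟩
          refine ⟨fun m => h2' m, fun m => ?_, h3'⟩
          by_cases hmk : m = k
          · simp [hmk]
          · simp only [if_neg hmk]
            exact h1' ⟨m, hmk⟩
        · rintro ⟨h1', h2', h3'⟩
          refine ⟨fun m => ?_, fun m => h1' m, h3'⟩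
          have := h2' m.1
          simpa [m.2] using this
      have hU1 : pr S.μ {ω' | S.U ω' ∈ (Set.univ : Set S.UT)} = 1 := pr_mem_univ _ h1
      have hRuniv : (∏ m : Fin K, pr S.μ {ω' | S.R m ω' ∈ (Set.univ : Set S.RT)}) = 1 :=
        Finset.prod_eq_one (fun m _ => pr_mem_univ _ h1)
      have hWuniv : pr S.μ {ω' | (fun m => S.W m ω') ∈ (Set.univ : Set (Fin K → Fin L → F))}
          = 1 := pr_mem_univ _ h1
      have hRsplit : (∏ m : Fin K, pr S.μ {ω' | S.R m ω' ∈ ({S.R m ω} : Set S.RT)})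
          = (∏ m : Fin K, pr S.μ {ω' | S.R m ω' ∈ s2 m})
            * (∏ m : Fin K, pr S.μ {ω' | S.R m ω' ∈ s3 m}) := by
        rw [← Finset.prod_mul_distrib]
        apply Finset.prod_congr rfl
        intro m _
        by_cases hmk : m = k
        · subst hmk
          simp only [hs2, hs3, eq_self_iff_true, if_true]
          rw [pr_mem_univ _ h1, mul_one]
        · simp only [hs2, hs3]
          rw [if_neg hmk, if_neg hmk, pr_mem_univ _ h1, one_mul]
      have hWsplit : pr S.μ {ω' | (fun m => S.W m ω') ∈ tb}
          = pr S.μ {ω' | (fun m => S.W m ω') ∈ t1} * pr S.μ {ω' | (fun m => S.W m ω') ∈ t3} := by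
        rw [hWt tb, hWt t1, hWt t3]
        simp only [htb, ht1, ht3]
        rw [card_filter_mem, card_filter_mem, card_filter_mem,
          hcardb (S.W k ω) (fun m => S.W m ω), hcard1 (S.W k ω), hcard3 (fun m => S.W m ω)]
        push_cast
        calc (1:ℝ) * ((1:ℝ)/(q:ℝ)^L)^K
            = (((q:ℝ)^L)^K * ((1:ℝ)/(q:ℝ)^L)^K) * ((1:ℝ)/(q:ℝ)^L)^K := by
              rw [hpowinv]
          _ = ((((q:ℝ)^L)^(K-1)) * ((q:ℝ)^L)) * ((1:ℝ)/(q:ℝ)^L)^K * ((1:ℝ)/(q:ℝ)^L)^K := by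
              rw [hxx]
          _ = (((q:ℝ)^L)^(K-1) * ((1:ℝ)/(q:ℝ)^L)^K) * (((q:ℝ)^L) * ((1:ℝ)/(q:ℝ)^L)^K) := by
              ring
      rw [eJ, hfact0 tb (fun m => ({S.R m ω} : Set S.RT)) ({S.U ω} : Set S.UT),
        eW1, hfact0 t1 (fun _ => (Set.univ : Set S.RT)) (Set.univ : Set S.UT),
        eR1, hfact0 (Set.univ) s2 (Set.univ),
        eB1, hfact0 t3 s3 ({S.U ω} : Set S.UT),
        hU1, hRuniv, hWuniv, hRsplit, hWsplit]
      ring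
    have entWk : ent q S.μ (S.W k) = (L : ℝ) := by
      have hlb : Real.logb q ((1:ℝ) / (q:ℝ)^L) = -(L:ℝ) := by
        rw [one_div, Real.logb_inv, Real.logb_pow, Real.logb_self_eq_one hq]
        simp
      unfold ent
      rw [Finset.sum_congr rfl (fun ω _ => by rw [hWkval ω, hlb])]
      have e : ∑ ω, S.μ ω * -(L:ℝ) = -(L:ℝ) := by
        rw [← Finset.sum_mul, h1, one_mul]
      rw [e, neg_neg]
    have hL0 : (0:ℝ) < (L : ℝ) := by exact_mod_cast Nat.lt_of_lt_of_le Nat.zero_lt_one hL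
    have expand : (1 + ent q S.μ (S.R k) / (L:ℝ)) * (L:ℝ) = (L:ℝ) + ent q S.μ (S.R k) := by
      field_simp
    rw [expand]
    linarith [step1, step2, step3, step4, step5, entWk]

end SPIR
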